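/- Let (X,d) be a metric space and μ a Borel measure on X, finite and positive on balls; write V(x,r)=μ(B(x,r)). Fix m≥2, D≥1 and κ∈[0,m/(m−1)), and assume condition (II.2): V(x,τr) ≤ D τ^D V(x,r) exp(τ^κ + r^κ) for all x∈X, τ≥1, r>0. Let p:(0,∞)×X×X→[0,∞) be measurable and suppose there are constants A, c₁, c₂>0 such that p_s(y,z) ≤ A·V(y,s^{1/m})^{−1}·exp(−c₁ (d(y,z)^m/s)^{1/(m−1)} + c₂ s^{κ/m}) for all s∈(0,2] and y,z∈X. Then there exists a constant C>0 such that for every x₀∈X, every r∈(0,1], putting t=r^m and B=B(x₀,r), for every measurable f: X→[0,∞) and every y, x′ ∈ B, ∫_X p_{2t}(y,z) f(z) dμ(z) ≤ C · sup_{ρ>0} (1/V(x′,ρ)) ∫_{B(x′,ρ)} f dμ. -/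

import Mathlib

open MeasureTheory Metric Real


set_option linter.unusedTactic false in
lemma aux_core (Dc κ α ε : ℝ) (hD : 0 ≤ Dc) (hκ0 : 0 ≤ κ) (hα : 1 < α)
    (hκα : κ < α) (hε : 0 < ε) :
    ∃ X₀ : ℝ, ∀ x : ℝ, X₀ ≤ x →
      (x + 5) ^ Dc * Real.exp ((x + 5) ^ κ - ε * x ^ α) ≤ Real.exp (-x) := by
  set β := max κ 1 with hβ
  have hβ1 : 1 ≤ β := le_max_right _ _
  have hβα : β < α := max_lt hκα hα
  have hκβ : κ ≤ β := le_max_left _ _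
  set K₀ : ℝ := 6 * Dc + 6 ^ κ + 1 with hK₀
  have hK₀pos : 0 < K₀ := by positivity
  refine ⟨max 1 ((K₀ / ε) ^ (1 / (α - β))), fun x hx => ?_⟩
  have hx1 : (1:ℝ) ≤ x := le_trans (le_max_left _ _) hx
  have hx0 : 0 < x := lt_of_lt_of_le one_pos hx1
  have hx5 : (0:ℝ) < x + 5 := by linarith
  have hx6 : x + 5 ≤ 6 * x := by linarith
  -- x ≤ x ^ β
  have hxβ : x ≤ x ^ β := by
    calc x = x ^ (1:ℝ) := (Real.rpow_one x).symm
    _ ≤ x ^ β := Real.rpow_le_rpow_of_exponent_le hx1 hβ1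
  -- log bound
  have hlog : Dc * Real.log (x + 5) ≤ 6 * Dc * x ^ β := by
    have h1 : Real.log (x + 5) ≤ x + 5 := Real.log_le_sub_one_of_pos hx5 |>.trans (by linarith)
    have h2 : Real.log (x + 5) ≤ 6 * x ^ β := by nlinarith
    nlinarith [Real.log_nonneg (by linarith : (1:ℝ) ≤ x + 5), mul_le_mul_of_nonneg_left h2 hD]
  -- rpow bound
  have hκbd : (x + 5) ^ κ ≤ 6 ^ κ * x ^ β := by
    calc (x + 5) ^ κ ≤ (6 * x) ^ κ := Real.rpow_le_rpow hx5.le hx6 hκ0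
    _ = 6 ^ κ * x ^ κ := Real.mul_rpow (by norm_num) hx0.le
    _ ≤ 6 ^ κ * x ^ β := by
        have := Real.rpow_le_rpow_of_exponent_le hx1 hκβ
        nlinarith [Real.rpow_nonneg (show (0:ℝ) ≤ 6 by norm_num) κ]
  -- the main estimate
  have hKx : K₀ * x ^ β ≤ ε * x ^ α := by
    have hX : (K₀ / ε) ^ (1 / (α - β)) ≤ x := le_trans (le_max_right _ _) hx
    have hαβ : 0 < α - β := by linarith
    have h1 : K₀ / ε ≤ x ^ (α - β) := by
      calc K₀ / ε = ((K₀ / ε) ^ (1 / (α - β))) ^ (α - β) := by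
            rw [← Real.rpow_mul (by positivity), one_div_mul_cancel hαβ.ne', Real.rpow_one]
      _ ≤ x ^ (α - β) := Real.rpow_le_rpow (Real.rpow_nonneg (by positivity) _) hX hαβ.le
    have h2 : K₀ ≤ ε * x ^ (α - β) := by
      rw [div_le_iff₀ hε] at h1; linarith [h1]
    calc K₀ * x ^ β ≤ ε * x ^ (α - β) * x ^ β := by
          nlinarith [Real.rpow_nonneg hx0.le β]
    _ = ε * x ^ α := by rw [mul_assoc, ← Real.rpow_add hx0]; ring_nf
  -- conclude
  have hexp : (x + 5) ^ Dc = Real.exp (Dc * Real.log (x + 5)) := by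
    rw [Real.rpow_def_of_pos hx5, mul_comm]
  rw [hexp, ← Real.exp_add]
  apply Real.exp_le_exp.mpr
  nlinarith

lemma aux_summable (Dc κ α ε : ℝ) (hD : 0 ≤ Dc) (hκ0 : 0 ≤ κ) (hα : 1 < α)
    (hκα : κ < α) (hε : 0 < ε) :
    Summable (fun k : ℕ => ((k:ℝ) + 5) ^ Dc * Real.exp (((k:ℝ) + 5) ^ κ - ε * (k:ℝ) ^ α)) := by
  obtain ⟨X₀, hX₀⟩ := aux_core Dc κ α ε hD hκ0 hα hκα hε
  set N := ⌈X₀⌉₊ with hN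
  rw [← summable_nat_add_iff N]
  refine Summable.of_nonneg_of_le
    (f := fun k : ℕ => Real.exp (-1) ^ k * Real.exp (-(N:ℝ)))
    (fun k => ?_) (fun k => ?_)
    ((summable_geometric_of_lt_one (Real.exp_nonneg _)
      (Real.exp_lt_one_iff.mpr (show (-1:ℝ) < 0 by norm_num))).mul_right _)
  · positivity
  have h := hX₀ ((k:ℝ) + N) (by
      have : X₀ ≤ (N:ℝ) := Nat.le_ceil X₀
      have : (0:ℝ) ≤ (k:ℝ) := Nat.cast_nonneg k
      push_cast
      linarith)
  push_cast at h ⊢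
  calc ((k:ℝ) + N + 5) ^ Dc * Real.exp (((k:ℝ) + N + 5) ^ κ - ε * ((k:ℝ) + N) ^ α)
      ≤ Real.exp (-((k:ℝ) + N)) := h
    _ = Real.exp (-1) ^ k * Real.exp (-(N:ℝ)) := by
      rw [← Real.exp_nat_mul, ← Real.exp_add]; ring_nf

set_option maxHeartbeats 1000000 in
/-- The maximal-function estimate (3.7) in the proof of Theorem 3.1:
`sup_{B} P⁰_{2t} f ≲ inf_{B} M(f)` for balls `B = B(x₀,r)` of radius `r ≤ 1` and `t = r^m`. -/
theorem stmt_8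
    {X : Type*} [MetricSpace X] [MeasurableSpace X] [BorelSpace X]
    (μ : Measure X)
    (hμ : ∀ (x : X) (r : ℝ), 0 < r → 0 < μ (ball x r) ∧ μ (ball x r) < ⊤)
    (m D κ : ℝ) (hm : 2 ≤ m) (hD : 1 ≤ D) (hκ0 : 0 ≤ κ) (hκ : κ < m / (m - 1))
    (hVD : ∀ (x : X) (τ r : ℝ), 1 ≤ τ → 0 < r →
      μ (ball x (τ * r)) ≤
        ENNReal.ofReal (D * τ ^ D * Real.exp (τ ^ κ + r ^ κ)) * μ (ball x r))
    (p : ℝ → X → X → ℝ)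
    (hp_nonneg : ∀ (t : ℝ) (x y : X), 0 < t → 0 ≤ p t x y)
    (hp_meas : Measurable fun q : ℝ × X × X => p q.1 q.2.1 q.2.2)
    (A c₁ c₂ : ℝ) (hA : 0 < A) (hc₁ : 0 < c₁) (hc₂ : 0 < c₂)
    (hUB : ∀ (s : ℝ) (y z : X), 0 < s → s ≤ 2 →
      p s y z ≤ A *
        Real.exp (-c₁ * (dist y z ^ m / s) ^ (1 / (m - 1)) + c₂ * s ^ (κ / m)) /
        (μ (ball y (s ^ (1 / m)))).toReal) :
    ∃ C : ℝ, 0 < C ∧ ∀ (x₀ : X) (r : ℝ), 0 < r → r ≤ 1 →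
      ∀ f : X → ℝ, Measurable f → (∀ z, 0 ≤ f z) →
        ∀ y x' : X, y ∈ ball x₀ r → x' ∈ ball x₀ r →
          (∫⁻ z, ENNReal.ofReal (p (2 * r ^ m) y z * f z) ∂μ) ≤
            ENNReal.ofReal C *
              ⨆ (ρ : ℝ) (_ : 0 < ρ),
                (μ (ball x' ρ))⁻¹ * ∫⁻ z in ball x' ρ, ENNReal.ofReal (f z) ∂μ := by
  have hm0 : (0:ℝ) < m := by linarith
  have hm10 : (0:ℝ) < m - 1 := by linarith
  set α := m / (m - 1) with hα_def
  have hα1 : 1 < α := (one_lt_div hm10).mpr (by linarith)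
  have h2pow : (0:ℝ) < (2:ℝ) ^ (1/(m-1)) := Real.rpow_pos_of_pos two_pos _
  set ε := c₁ / (2:ℝ) ^ (1/(m-1)) with hε_def
  have hε : 0 < ε := div_pos hc₁ h2pow
  set K := A * D * Real.exp (2*c₂ + 1) with hK_def
  have hsum0 : Summable (fun k : ℕ => ((k:ℝ)+5) ^ D * Real.exp (((k:ℝ)+5) ^ κ - ε * (k:ℝ) ^ α)) :=
    aux_summable D κ α ε (by linarith) hκ0 hα1 hκ hε
  set a : ℕ → ℝ := fun k => K * (((k:ℝ)+5) ^ D * Real.exp (((k:ℝ)+5) ^ κ - ε * (k:ℝ) ^ α))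
    with ha_def
  have hsum : Summable a := hsum0.mul_left K
  have hKpos : 0 < K := by positivity
  have ha_nonneg : ∀ k, 0 ≤ a k := fun k => by
    have h1 : (0:ℝ) ≤ ((k:ℝ)+5) ^ D := Real.rpow_nonneg (by positivity) _
    have h2 := Real.exp_pos (((k:ℝ)+5) ^ κ - ε * (k:ℝ) ^ α)
    rw [ha_def]; positivity
  have ha0 : 0 < a 0 := by
    have h1 : (0:ℝ) < ((0:ℕ):ℝ)+5 := by norm_num
    have h2 : (0:ℝ) < (((0:ℕ):ℝ)+5) ^ D := Real.rpow_pos_of_pos h1 _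
    have h3 := Real.exp_pos ((((0:ℕ):ℝ)+5) ^ κ - ε * ((0:ℕ):ℝ) ^ α)
    rw [ha_def]; positivity
  refine ⟨∑' k, a k, hsum.tsum_pos ha_nonneg 0 ha0, ?_⟩
  intro x₀ r hr hr1 f hf hf0 y x' hy hx'
  -- basic facts about s = 2 r^m
  have hrm : 0 < r ^ m := Real.rpow_pos_of_pos hr m
  have hs0 : (0:ℝ) < 2 * r ^ m := by positivity
  have hrm1 : r ^ m ≤ 1 := Real.rpow_le_one hr.le hr1 (by linarith)
  have hs2 : 2 * r ^ m ≤ 2 := by linarith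
  have hroot : (2 * r ^ m) ^ (1/m) = 2 ^ (1/m) * r := by
    rw [Real.mul_rpow (by norm_num) hrm.le, ← Real.rpow_mul hr.le, mul_one_div,
      div_self hm0.ne', Real.rpow_one]
  have hroot_ge : r ≤ (2 * r ^ m) ^ (1/m) := by
    rw [hroot]
    have h1 : (2:ℝ) ^ (0:ℝ) ≤ 2 ^ (1/m) :=
      Real.rpow_le_rpow_of_exponent_le one_le_two (by positivity)
    rw [Real.rpow_zero] at h1
    nlinarith
  have hroot_pos : 0 < (2*r^m) ^ (1/m) := Real.rpow_pos_of_pos hs0 _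
  obtain ⟨hV0, hVtop⟩ := hμ y _ hroot_pos
  set V := μ (ball y ((2*r^m) ^ (1/m))) with hV_def
  have hVt : 0 < V.toReal := ENNReal.toReal_pos hV0.ne' hVtop.ne
  set M := ⨆ (ρ : ℝ) (_ : 0 < ρ),
      (μ (ball x' ρ))⁻¹ * ∫⁻ z in ball x' ρ, ENNReal.ofReal (f z) ∂μ with hM_def
  have hMax : ∀ ρ : ℝ, 0 < ρ →
      (∫⁻ z in ball x' ρ, ENNReal.ofReal (f z) ∂μ) ≤ M * μ (ball x' ρ) := by
    intro ρ hρ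
    obtain ⟨hb0, hbtop⟩ := hμ x' ρ hρ
    have h1 : (μ (ball x' ρ))⁻¹ * ∫⁻ z in ball x' ρ, ENNReal.ofReal (f z) ∂μ ≤ M := by
      rw [hM_def]
      exact le_iSup_of_le ρ (by rw [iSup_pos hρ])
    calc (∫⁻ z in ball x' ρ, ENNReal.ofReal (f z) ∂μ)
        = μ (ball x' ρ) * ((μ (ball x' ρ))⁻¹ * ∫⁻ z in ball x' ρ, ENNReal.ofReal (f z) ∂μ) := by
          rw [← mul_assoc, ENNReal.mul_inv_cancel hb0.ne' hbtop.ne, one_mul]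
      _ ≤ μ (ball x' ρ) * M := mul_le_mul_right h1 _
      _ = M * μ (ball x' ρ) := mul_comm _ _
  have hdyx : dist y x' < 2 * r := by
    have h1 := mem_ball.mp hy
    have h2 := mem_ball.mp hx'
    calc dist y x' ≤ dist y x₀ + dist x₀ x' := dist_triangle _ _ _
    _ < r + r := add_lt_add h1 (by rwa [dist_comm])
    _ = 2 * r := by ring
  -- annuli
  set S : ℕ → Set X := fun k => ball y (((k:ℝ)+1)*r) \ ball y ((k:ℝ)*r) with hS_def
  have hSmeas : ∀ k, MeasurableSet (S k) := fun k => measurableSet_ball.diff measurableSet_ball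
  have hSkey : ∀ i j : ℕ, i < j → Disjoint (S i) (S j) := by
    intro i j h
    refine Set.disjoint_left.mpr fun z hzi hzj => ?_
    have h1 : dist z y < ((i:ℝ)+1)*r := mem_ball.mp hzi.1
    have h2 : ((i:ℝ)+1) ≤ (j:ℝ) := by exact_mod_cast h
    exact hzj.2 (mem_ball.mpr (by nlinarith))
  have hSdisj : Pairwise (Function.onFun Disjoint S) := by
    intro i j hij
    rcases lt_or_gt_of_ne hij with h | h
    · exact hSkey i j h
    · exact (hSkey j i h).symm
  have hSunion : (⋃ k, S k) = Set.univ := by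
    ext z
    simp only [hS_def, Set.mem_iUnion, Set.mem_univ, iff_true, Set.mem_diff, mem_ball, not_lt]
    refine ⟨⌊dist z y / r⌋₊, ?_, ?_⟩
    · have h1 : dist z y / r < ⌊dist z y / r⌋₊ + 1 := Nat.lt_floor_add_one _
      have h2 := (div_lt_iff₀ hr).mp h1
      linarith
    · have h0 : 0 ≤ dist z y / r := div_nonneg dist_nonneg hr.le
      have h2 : (⌊dist z y / r⌋₊:ℝ) ≤ dist z y / r := Nat.floor_le h0
      calc (⌊dist z y / r⌋₊:ℝ) * r ≤ (dist z y / r) * r := by nlinarith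
      _ = dist z y := by field_simp
  -- pointwise constants on annuli
  set b : ℕ → ℝ := fun k => A * Real.exp (-(ε * (k:ℝ) ^ α) + 2*c₂) / V.toReal with hb_def
  have hb_nonneg : ∀ k, 0 ≤ b k := fun k => by
    rw [hb_def]; positivity
  have hpow_id : ∀ k : ℕ, c₁ * (((k:ℝ) ^ m) / 2) ^ (1/(m-1)) = ε * (k:ℝ) ^ α := by
    intro k
    rw [Real.div_rpow (Real.rpow_nonneg (Nat.cast_nonneg k) m) (by norm_num),
      ← Real.rpow_mul (Nat.cast_nonneg k), mul_one_div, hε_def, hα_def]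
    field_simp
  have hpt : ∀ k : ℕ, ∀ z ∈ S k, p (2*r^m) y z ≤ b k := by
    intro k z hz
    have hd_lo : (k:ℝ) * r ≤ dist y z := by
      have h2 := hz.2
      rw [mem_ball, not_lt] at h2
      rwa [dist_comm]
    have h1 := hUB (2*r^m) y z hs0 hs2
    rw [← hV_def] at h1
    refine h1.trans ?_
    simp only [hb_def]
    have hexp_le : -c₁ * (dist y z ^ m / (2*r^m)) ^ (1/(m-1)) + c₂ * (2*r^m) ^ (κ/m)
        ≤ -(ε * (k:ℝ)^α) + 2*c₂ := by
      have hA1 : ε * (k:ℝ)^α ≤ c₁ * (dist y z ^ m / (2*r^m)) ^ (1/(m-1)) := by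
        rw [← hpow_id k]
        refine mul_le_mul_of_nonneg_left ?_ hc₁.le
        refine Real.rpow_le_rpow (by positivity) ?_ (by positivity)
        have hdm : ((k:ℝ)*r) ^ m ≤ dist y z ^ m :=
          Real.rpow_le_rpow (by positivity) hd_lo (by linarith)
        rw [Real.mul_rpow (Nat.cast_nonneg k) hr.le] at hdm
        rw [div_le_div_iff₀ (by norm_num : (0:ℝ) < 2) (by positivity)]
        calc (k:ℝ)^m * (2 * r^m) = 2 * ((k:ℝ)^m * r^m) := by ring
        _ ≤ 2 * dist y z ^ m := by linarith
        _ = dist y z ^ m * 2 := by ring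
      have hB1 : c₂ * (2*r^m) ^ (κ/m) ≤ 2*c₂ := by
        have hh1 : (2*r^m) ^ (κ/m) ≤ 2 ^ (κ/m) := Real.rpow_le_rpow hs0.le hs2 (by positivity)
        have hκm : κ / m ≤ 1 := by
          rw [div_le_one hm0]
          have hma : α ≤ m := by
            rw [hα_def, div_le_iff₀ hm10]; nlinarith
          linarith
        have hh2 : (2:ℝ) ^ (κ/m) ≤ 2 ^ (1:ℝ) :=
          Real.rpow_le_rpow_of_exponent_le one_le_two hκm
        rw [Real.rpow_one] at hh2
        nlinarith
      linarith
    gcongr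
  -- per-annulus integral bound
  have hterm : ∀ k : ℕ,
      (∫⁻ z in S k, ENNReal.ofReal (p (2*r^m) y z * f z) ∂μ) ≤ ENNReal.ofReal (a k) * M := by
    intro k
    have hk5 : (0:ℝ) < (k:ℝ)+5 := by positivity
    have hrκ : r ^ κ ≤ 1 := Real.rpow_le_one hr.le hr1 hκ0
    calc (∫⁻ z in S k, ENNReal.ofReal (p (2*r^m) y z * f z) ∂μ)
        ≤ ∫⁻ z in S k, ENNReal.ofReal (b k) * ENNReal.ofReal (f z) ∂μ := by
          refine setLIntegral_mono (measurable_const.mul hf.ennreal_ofReal) fun z hz => ?_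
          rw [← ENNReal.ofReal_mul (hb_nonneg k)]
          exact ENNReal.ofReal_le_ofReal (mul_le_mul_of_nonneg_right (hpt k z hz) (hf0 z))
      _ = ENNReal.ofReal (b k) * ∫⁻ z in S k, ENNReal.ofReal (f z) ∂μ :=
          lintegral_const_mul _ hf.ennreal_ofReal
      _ ≤ ENNReal.ofReal (b k) * ∫⁻ z in ball x' (((k:ℝ)+3)*r), ENNReal.ofReal (f z) ∂μ := by
          gcongr
          intro z hz
          rw [mem_ball]
          have h1 : dist z y < ((k:ℝ)+1)*r := mem_ball.mp hz.1
          calc dist z x' ≤ dist z y + dist y x' := dist_triangle _ _ _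
          _ < ((k:ℝ)+1)*r + 2*r := add_lt_add h1 hdyx
          _ = ((k:ℝ)+3)*r := by ring
      _ ≤ ENNReal.ofReal (b k) * (M * μ (ball x' (((k:ℝ)+3)*r))) := by
          gcongr
          exact hMax _ (by positivity)
      _ ≤ ENNReal.ofReal (b k) * (M * μ (ball y (((k:ℝ)+5)*r))) := by
          gcongr
          intro z hz
          rw [mem_ball] at hz ⊢
          have h2 : dist x' y < 2*r := by rwa [dist_comm] at hdyx
          calc dist z y ≤ dist z x' + dist x' y := dist_triangle _ _ _
          _ < ((k:ℝ)+3)*r + 2*r := add_lt_add hz h2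
          _ = ((k:ℝ)+5)*r := by ring
      _ ≤ ENNReal.ofReal (b k) * (M *
            (ENNReal.ofReal (D * ((k:ℝ)+5)^D * Real.exp (((k:ℝ)+5)^κ + r^κ)) * μ (ball y r))) := by
          gcongr
          exact hVD y ((k:ℝ)+5) r (by linarith [Nat.cast_nonneg (α := ℝ) k]) hr
      _ ≤ ENNReal.ofReal (b k) * (M *
            (ENNReal.ofReal (D * ((k:ℝ)+5)^D * Real.exp (((k:ℝ)+5)^κ + r^κ)) * V)) := by
          gcongr
          rw [hV_def]
          exact measure_mono (ball_subset_ball hroot_ge)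
      _ = (ENNReal.ofReal (b k) *
            ENNReal.ofReal (D * ((k:ℝ)+5)^D * Real.exp (((k:ℝ)+5)^κ + r^κ)) *
            ENNReal.ofReal V.toReal) * M := by
          rw [ENNReal.ofReal_toReal hVtop.ne]; ring
      _ ≤ ENNReal.ofReal (a k) * M := by
          gcongr
          have hDk : (0:ℝ) ≤ D * ((k:ℝ)+5)^D * Real.exp (((k:ℝ)+5)^κ + r^κ) := by positivity
          rw [← ENNReal.ofReal_mul (hb_nonneg k), ← ENNReal.ofReal_mul (mul_nonneg (hb_nonneg k) hDk)]
          refine ENNReal.ofReal_le_ofReal ?_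
          have heq : b k * (D * ((k:ℝ)+5)^D * Real.exp (((k:ℝ)+5)^κ + r^κ)) * V.toReal
              = A * D * ((k:ℝ)+5)^D *
                (Real.exp (-(ε*(k:ℝ)^α) + 2*c₂) * Real.exp (((k:ℝ)+5)^κ + r^κ)) := by
            simp only [hb_def]
            field_simp
          have key : Real.exp (-(ε*(k:ℝ)^α) + 2*c₂) * Real.exp (((k:ℝ)+5)^κ + r^κ)
              ≤ Real.exp (2*c₂+1) * Real.exp (((k:ℝ)+5)^κ - ε*(k:ℝ)^α) := by
            rw [← Real.exp_add, ← Real.exp_add]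
            exact Real.exp_le_exp.mpr (by linarith)
          have hADk : (0:ℝ) ≤ A * D * ((k:ℝ)+5)^D := by positivity
          rw [heq]; simp only [ha_def, hK_def]
          calc A * D * ((k:ℝ)+5)^D *
                (Real.exp (-(ε*(k:ℝ)^α) + 2*c₂) * Real.exp (((k:ℝ)+5)^κ + r^κ))
              ≤ A * D * ((k:ℝ)+5)^D *
                (Real.exp (2*c₂+1) * Real.exp (((k:ℝ)+5)^κ - ε*(k:ℝ)^α)) :=
                mul_le_mul_of_nonneg_left key hADk
          _ = A * D * Real.exp (2*c₂+1) *
                (((k:ℝ)+5)^D * Real.exp (((k:ℝ)+5)^κ - ε*(k:ℝ)^α)) := by ring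
  -- put everything together
  calc (∫⁻ z, ENNReal.ofReal (p (2*r^m) y z * f z) ∂μ)
      = ∑' k, ∫⁻ z in S k, ENNReal.ofReal (p (2*r^m) y z * f z) ∂μ := by
        rw [← lintegral_iUnion hSmeas hSdisj, hSunion, Measure.restrict_univ]
    _ ≤ ∑' k, ENNReal.ofReal (a k) * M := ENNReal.tsum_le_tsum hterm
    _ = (∑' k, ENNReal.ofReal (a k)) * M := ENNReal.tsum_mul_right
    _ = ENNReal.ofReal (∑' k, a k) * M := by
        rw [ENNReal.ofReal_tsum_of_nonneg ha_nonneg hsum]
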